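/- arXiv:1508.05688 — 4 statements merged into one kernel-verified Lean document; each statement's English description precedes it below -/
import Mathlib

section
/- Let m ≥ 1 and k ∈ ℕ. The real vector space of homogeneous polynomials of degree k in the variables x_1, …, x_{m+1} that are invariant under the special orthogonal group SO(m+1) (i.e. polynomials P with P(Ax) = P(x) for every A ∈ SO(m+1)) has dimension 1 when k is even and dimension 0 when k is odd. -/
set_option maxHeartbeats 1000000
set_option synthInstance.maxHeartbeats 400000

open Matrix MvPolynomial

lemma aux_eval_smul {n k : ℕ} {P : MvPolynomial (Fin n) ℝ} (hP : P.IsHomogeneous k)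
    (r : ℝ) (x : Fin n → ℝ) : eval (r • x) P = r ^ k * eval x P := by
  rw [eval_eq', eval_eq', Finset.mul_sum]
  refine Finset.sum_congr rfl fun d hd => ?_
  have hdeg : ∑ i, d i = k := by
    have h1 : d.degree = k := by
      by_contra h
      exact mem_support_iff.mp hd (hP.coeff_eq_zero h)
    rw [← h1, Finsupp.degree]
    exact (Finset.sum_subset (Finset.subset_univ _)
      (fun i _ hi => Finsupp.notMem_support_iff.mp hi)).symm
  simp only [Pi.smul_apply, smul_eq_mul, mul_pow, Finset.prod_mul_distrib,
    Finset.prod_pow_eq_pow_sum, hdeg]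
  ring

lemma aux_exists_orth {m : ℕ} (u : Fin (m + 1) → ℝ) (hu : ∑ i, u i ^ 2 = 1) :
    ∃ B : Matrix (Fin (m + 1)) (Fin (m + 1)) ℝ, Bᵀ * B = 1 ∧ ∀ i, B i 0 = u i := by
  set uE : EuclideanSpace ℝ (Fin (m + 1)) := WithLp.toLp 2 u with huE
  have hcard : Module.finrank ℝ (EuclideanSpace ℝ (Fin (m + 1))) = Fintype.card (Fin (m + 1)) := by
    simp
  have hnorm : ‖uE‖ = 1 := by
    rw [EuclideanSpace.norm_eq]
    simp only [Real.norm_eq_abs, sq_abs]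
    rw [show (∑ i, uE i ^ 2) = 1 from hu, Real.sqrt_one]
  have horth : Orthonormal ℝ
      (({0} : Set (Fin (m + 1))).restrict (fun _ : Fin (m + 1) => uE)) := by
    constructor
    · intro i; exact hnorm
    · intro i j hij
      exact absurd (Subtype.ext (by
        have hi := i.2; have hj := j.2
        simp only [Set.mem_singleton_iff] at hi hj
        rw [hi, hj])) hij
  obtain ⟨b, hb⟩ := horth.exists_orthonormalBasis_extension_of_card_eq hcard
  refine ⟨Matrix.of fun i j => b j i, ?_, fun i => ?_⟩
  · ext i j
    have horthb := b.orthonormal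
    rw [orthonormal_iff_ite] at horthb
    have h2 := horthb i j
    have h3 : ∑ k, b i k * b j k = if i = j then (1:ℝ) else 0 := by
      rw [← h2]
      simp [PiLp.inner_apply, RCLike.inner_apply, mul_comm]
    simp only [Matrix.mul_apply, Matrix.transpose_apply, Matrix.of_apply, Matrix.one_apply]
    exact h3
  · have h0 := hb 0 rfl
    change b 0 = uE at h0
    show b 0 i = u i
    rw [h0]

lemma aux_exists_so_single {m : ℕ} (hm : 1 ≤ m) (x : Fin (m + 1) → ℝ) :
    ∃ A : Matrix (Fin (m + 1)) (Fin (m + 1)) ℝ, Aᵀ * A = 1 ∧ A.det = 1 ∧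
      A *ᵥ Pi.single 0 (Real.sqrt (∑ i, x i ^ 2)) = x := by
  set r : ℝ := Real.sqrt (∑ i, x i ^ 2) with hr
  by_cases hx : x = 0
  · refine ⟨1, by simp, by simp, ?_⟩
    subst hx
    have : r = 0 := by simp [hr]
    rw [this]
    simp [Matrix.one_mulVec]
  · have hsum : 0 < ∑ i, x i ^ 2 := by
      rcases Function.ne_iff.mp hx with ⟨i, hi⟩
      have : 0 < x i ^ 2 := pow_two_pos_of_ne_zero hi
      exact this.trans_le (Finset.single_le_sum (fun j _ => sq_nonneg (x j)) (Finset.mem_univ i))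
    have hrpos : 0 < r := Real.sqrt_pos.mpr hsum
    have hr2 : r ^ 2 = ∑ i, x i ^ 2 := Real.sq_sqrt hsum.le
    set u : Fin (m + 1) → ℝ := r⁻¹ • x with hu
    have husum : ∑ i, u i ^ 2 = 1 := by
      simp only [hu, Pi.smul_apply, smul_eq_mul, mul_pow]
      rw [← Finset.mul_sum, ← hr2]
      field_simp
    obtain ⟨B, hB1, hB2⟩ := aux_exists_orth u husum
    have hdet : B.det = 1 ∨ B.det = -1 := by
      have : B.det * B.det = 1 := by
        have := congrArg Matrix.det hB1
        rwa [Matrix.det_mul, Matrix.det_transpose, Matrix.det_one, mul_comm] at this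
      rcases mul_self_eq_one_iff.mp this with h | h
      · exact Or.inl h
      · exact Or.inr h
    set D : Matrix (Fin (m + 1)) (Fin (m + 1)) ℝ :=
      Matrix.diagonal (fun j => if j = (⟨1, by omega⟩ : Fin (m + 1)) then (-1 : ℝ) else 1) with hD
    have hone : (⟨1, by omega⟩ : Fin (m + 1)) ≠ 0 := by
      intro h
      simpa using congrArg Fin.val h
    have hDD : Dᵀ * D = 1 := by
      rw [hD, Matrix.diagonal_transpose, Matrix.diagonal_mul_diagonal]
      convert Matrix.diagonal_one with j
      by_cases h : j = (⟨1, by omega⟩ : Fin (m + 1)) <;> simp [h]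
    have hDdet : D.det = -1 := by
      rw [hD, Matrix.det_diagonal]
      rw [Finset.prod_eq_single (⟨1, by omega⟩ : Fin (m + 1))]
      · simp
      · intro j _ hj; simp [hj]
      · simp
    rcases hdet with h | h
    · refine ⟨B, hB1, h, ?_⟩
      rw [Matrix.mulVec_single]
      funext i
      rw [Pi.smul_apply, Matrix.col_apply, hB2 i]
      show r⁻¹ * x i * r = x i
      field_simp
    · refine ⟨B * D, ?_, ?_, ?_⟩
      · rw [Matrix.transpose_mul, Matrix.mul_assoc, ← Matrix.mul_assoc Bᵀ, hB1, Matrix.one_mul,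
          hDD]
      · rw [Matrix.det_mul, h, hDdet]; ring
      · rw [Matrix.mulVec_single]
        funext i
        have hcol : (B * D) i 0 = u i := by
          rw [hD, Matrix.mul_diagonal]
          simp [hone.symm, hB2 i]
        rw [Pi.smul_apply, Matrix.col_apply, hcol]
        show r⁻¹ * x i * r = x i
        field_simp

lemma aux_exists_so {m : ℕ} (hm : 1 ≤ m) (x y : Fin (m + 1) → ℝ)
    (h : ∑ i, x i ^ 2 = ∑ i, y i ^ 2) :
    ∃ A : Matrix (Fin (m + 1)) (Fin (m + 1)) ℝ, Aᵀ * A = 1 ∧ A.det = 1 ∧ A *ᵥ x = y := by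
  obtain ⟨A₁, h₁o, h₁d, h₁v⟩ := aux_exists_so_single hm x
  obtain ⟨A₂, h₂o, h₂d, h₂v⟩ := aux_exists_so_single hm y
  have h₂v' : A₂ *ᵥ Pi.single 0 (Real.sqrt (∑ i, x i ^ 2)) = y := by rw [h]; exact h₂v
  refine ⟨A₂ * A₁ᵀ, ?_, ?_, ?_⟩
  · rw [Matrix.transpose_mul, Matrix.transpose_transpose, Matrix.mul_assoc,
      ← Matrix.mul_assoc A₂ᵀ, h₂o, Matrix.one_mul, mul_eq_one_comm.mp h₁o]
  · rw [Matrix.det_mul, Matrix.det_transpose, h₁d, h₂d]; ring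
  · have hAx : A₁ᵀ *ᵥ x = Pi.single 0 (Real.sqrt (∑ i, x i ^ 2)) := by
      have h5 := congrArg (fun v => A₁ᵀ *ᵥ v) h₁v
      simp only [Matrix.mulVec_mulVec, h₁o, Matrix.one_mulVec] at h5
      exact h5.symm
    rw [← Matrix.mulVec_mulVec, hAx, h₂v']

lemma aux_aeval_eq_eval {n : ℕ} (f : Fin n → ℝ) (q : MvPolynomial (Fin n) ℝ) :
    aeval f q = eval f q := by
  rw [aeval_eq_eval₂Hom, eval, Algebra.algebraMap_self]

lemma aux_eval_subst {m : ℕ} (A : Matrix (Fin (m + 1)) (Fin (m + 1)) ℝ)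
    (P : MvPolynomial (Fin (m + 1)) ℝ) (z : Fin (m + 1) → ℝ) :
    eval z (aeval (fun i => ∑ j, A i j • (X j : MvPolynomial (Fin (m + 1)) ℝ)) P) =
      eval (A *ᵥ z) P := by
  rw [← aux_aeval_eq_eval z, aeval_eq_bind₁, aeval_bind₁]
  rw [show A *ᵥ z = fun i => aeval z (∑ j, A i j • (X j : MvPolynomial (Fin (m + 1)) ℝ)) from ?_,
    aux_aeval_eq_eval]
  funext i
  simp [Matrix.mulVec, dotProduct, smul_eq_mul]

lemma aux_norm_pres {m : ℕ} {A : Matrix (Fin (m + 1)) (Fin (m + 1)) ℝ} (h1 : Aᵀ * A = 1)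
    (z : Fin (m + 1) → ℝ) : ∑ i, (A *ᵥ z) i ^ 2 = ∑ i, z i ^ 2 := by
  have : (A *ᵥ z) ⬝ᵥ (A *ᵥ z) = z ⬝ᵥ z := by
    rw [Matrix.dotProduct_mulVec, ← Matrix.mulVec_transpose, Matrix.mulVec_mulVec, h1,
      Matrix.one_mulVec]
  simpa [dotProduct, sq] using this

/-- The space of homogeneous polynomials of degree `k` in `m+1` variables that are invariant
under `SO(m+1)` (matrices `A` with `AᵀA = 1`, `det A = 1`, acting by substitution `x ↦ Ax`):
the space of symmetric isotropic tensors of order `k`. -/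
noncomputable def isotropicSubmodule (m k : ℕ) : Submodule ℝ (MvPolynomial (Fin (m + 1)) ℝ) where
  carrier := {P | P.IsHomogeneous k ∧
    ∀ A : Matrix (Fin (m + 1)) (Fin (m + 1)) ℝ, Aᵀ * A = 1 → A.det = 1 →
      aeval (fun i => ∑ j, A i j • (X j : MvPolynomial (Fin (m + 1)) ℝ)) P = P}
  add_mem' := by
    rintro P Q ⟨hP1, hP2⟩ ⟨hQ1, hQ2⟩
    exact ⟨hP1.add hQ1, fun A h1 h2 => by rw [map_add, hP2 A h1 h2, hQ2 A h1 h2]⟩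
  zero_mem' := ⟨isHomogeneous_zero _ _ _, fun A h1 h2 => map_zero _⟩
  smul_mem' := by
    rintro c P ⟨hP1, hP2⟩
    refine ⟨fun d hd => hP1 ?_, fun A h1 h2 => by rw [_root_.map_smul, hP2 A h1 h2]⟩
    intro h
    apply hd
    rw [coeff_smul, h, smul_zero]

/-- The real vector space of `SO(m+1)`-invariant homogeneous polynomials of degree `k` in
`m+1` variables has dimension `1` when `k` is even and dimension `0` when `k` is odd. -/
theorem stmt_8 (m k : ℕ) (hm : 1 ≤ m) :
    (Even k → Module.rank ℝ (isotropicSubmodule m k) = 1) ∧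
    (Odd k → Module.rank ℝ (isotropicSubmodule m k) = 0) := by
  constructor
  · rintro ⟨t, ht⟩
    set Q : MvPolynomial (Fin (m + 1)) ℝ := (∑ i, X i ^ 2) ^ t with hQdef
    have hQhom : Q.IsHomogeneous k := by
      have h2 : (∑ i : Fin (m + 1), (X i : MvPolynomial (Fin (m + 1)) ℝ) ^ 2).IsHomogeneous 2 :=
        IsHomogeneous.sum _ _ _ (fun i _ => isHomogeneous_X_pow i 2)
      have := h2.pow t
      rwa [show 2 * t = k by omega] at this
    have hQeval : ∀ z : Fin (m + 1) → ℝ, eval z Q = (∑ i, z i ^ 2) ^ t := by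
      intro z
      simp [hQdef]
    have hQmem : Q ∈ isotropicSubmodule m k := by
      refine ⟨hQhom, fun A h1 h2 => ?_⟩
      apply MvPolynomial.funext
      intro z
      rw [aux_eval_subst, hQeval, hQeval, aux_norm_pres h1]
    have hQne : Q ≠ 0 := by
      intro h
      have h1 := hQeval (fun _ => 1)
      rw [h, map_zero] at h1
      have : ((0 : ℝ)) = ((m : ℝ) + 1) ^ t := by simpa using h1
      have hpos : (0 : ℝ) < ((m : ℝ) + 1) ^ t := by positivity
      rw [← this] at hpos
      exact lt_irrefl 0 hpos
    have hspan : isotropicSubmodule m k = Submodule.span ℝ {Q} := by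
      apply le_antisymm
      · rintro P ⟨hPhom, hPinv⟩
        rw [Submodule.mem_span_singleton]
        refine ⟨eval (Pi.single 0 1) P, ?_⟩
        apply MvPolynomial.funext
        intro z
        have hnn : 0 ≤ ∑ i, z i ^ 2 := Finset.sum_nonneg fun i _ => sq_nonneg _
        set r : ℝ := Real.sqrt (∑ i, z i ^ 2) with hrdef
        have hr2 : r ^ 2 = ∑ i, z i ^ 2 := Real.sq_sqrt hnn
        have hsingle : ∑ i, (Pi.single 0 r : Fin (m + 1) → ℝ) i ^ 2 = ∑ i, z i ^ 2 := by
          rw [Finset.sum_eq_single 0]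
          · rw [Pi.single_eq_same, hr2]
          · intro j _ hj
            rw [Pi.single_eq_of_ne hj]
            ring
          · intro h; exact absurd (Finset.mem_univ _) h
        obtain ⟨A, h1, h2, h3⟩ := aux_exists_so hm (Pi.single 0 r) z hsingle
        have e1 : eval z P = eval (Pi.single 0 r) P := by
          rw [← h3, ← aux_eval_subst A P (Pi.single 0 r), hPinv A h1 h2]
        have e2 : (Pi.single 0 r : Fin (m + 1) → ℝ)
            = r • (Pi.single 0 (1 : ℝ) : Fin (m + 1) → ℝ) := by
          funext i
          by_cases h : i = 0
          · subst h; simp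
          · simp [Pi.single_eq_of_ne h]
        have e3 : eval (Pi.single 0 r : Fin (m + 1) → ℝ) P
            = r ^ k * eval (Pi.single 0 (1 : ℝ)) P := by
          rw [e2, aux_eval_smul hPhom]
        have e4 : r ^ k = (∑ i, z i ^ 2) ^ t := by
          rw [show k = 2 * t by omega, pow_mul, hr2]
        rw [smul_eq_C_mul, _root_.map_mul, eval_C, hQeval, e1, e3, e4]
        ring
      · rw [Submodule.span_le, Set.singleton_subset_iff]
        exact hQmem
    rw [hspan, rank_span_set (LinearIndepOn.singleton hQne), Cardinal.mk_singleton]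
  · intro hk
    have hbot : isotropicSubmodule m k = ⊥ := by
      rw [Submodule.eq_bot_iff]
      rintro P ⟨hPhom, hPinv⟩
      apply hPhom.eq_zero_of_forall_eval_eq_zero
      intro z
      have hsq : ∑ i, z i ^ 2 = ∑ i, (-z) i ^ 2 := by
        simp
      obtain ⟨A, h1, h2, h3⟩ := aux_exists_so hm z (-z) hsq
      have e1 : eval (-z) P = eval z P := by
        rw [← h3, ← aux_eval_subst A P z, hPinv A h1 h2]
      have e2 : eval (-z) P = -eval z P := by
        have h4 := aux_eval_smul hPhom (-1) z
        rw [hk.neg_one_pow] at h4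
        rw [show (-z : Fin (m + 1) → ℝ) = (-1 : ℝ) • z by funext i; simp, h4]
        ring
      rw [e1] at e2
      linarith
    rw [hbot]
    exact rank_bot ℝ _
end

section
/- Let m ≥ 1 and let P be a homogeneous polynomial of degree d in the variables x_1, …, x_{m+1} that is invariant under the special orthogonal group SO(m+1), i.e. P(Ax) = P(x) for every A ∈ SO(m+1). If d is odd then P = 0, and if d = 2k is even then P = c·(x_1² + ⋯ + x_{m+1}²)^k for some constant c ∈ ℝ. -/
open Matrix

private lemma eval_homog_smul {n d : ℕ} {P : MvPolynomial (Fin n) ℝ}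
    (h : P.IsHomogeneous d) (r : ℝ) (x : Fin n → ℝ) :
    MvPolynomial.eval (r • x) P = r ^ d * MvPolynomial.eval x P := by
  rw [MvPolynomial.eval_eq', MvPolynomial.eval_eq', Finset.mul_sum]
  refine Finset.sum_congr rfl fun e he => ?_
  have hdeg : ∑ i, e i = d := by
    have h1 := h (MvPolynomial.mem_support_iff.mp he)
    rw [Finsupp.weight_apply] at h1
    rw [← h1, Finsupp.sum]
    rw [Finset.sum_subset (Finset.subset_univ e.support)]
    · simp
    · intro i _ hi
      simp [Finsupp.notMem_support_iff.mp hi]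
  calc P.coeff e * ∏ i, (r • x) i ^ e i
      = P.coeff e * ∏ i, (r ^ e i * x i ^ e i) := by
        simp [mul_pow]
    _ = P.coeff e * ((∏ i, r ^ e i) * ∏ i, x i ^ e i) := by
        rw [Finset.prod_mul_distrib]
    _ = r ^ d * (P.coeff e * ∏ i, x i ^ e i) := by
        rw [Finset.prod_pow_eq_pow_sum, hdeg]; ring

private lemma eval_aeval' {n : ℕ} (f : Fin n → MvPolynomial (Fin n) ℝ)
    (x : Fin n → ℝ) (P : MvPolynomial (Fin n) ℝ) :
    MvPolynomial.eval x (MvPolynomial.aeval f P) =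
      MvPolynomial.eval (fun i => MvPolynomial.eval x (f i)) P := by
  induction P using MvPolynomial.induction_on with
  | C a => simp
  | add p q hp hq => simp only [map_add, hp, hq]
  | mul_X p i hp => simp only [_root_.map_mul, hp, MvPolynomial.aeval_X, MvPolynomial.eval_X]

/-- SO(m+1) acts transitively on the unit sphere, matrix version: for any unit vector `u`
there is a special orthogonal matrix whose 0th column is `u`. -/
private lemma exists_so_col {m : ℕ} (hm : 1 ≤ m) (u : Fin (m + 1) → ℝ)
    (hu : ∑ i, u i ^ 2 = 1) :
    ∃ A : Matrix (Fin (m + 1)) (Fin (m + 1)) ℝ,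
      Aᵀ * A = 1 ∧ A.det = 1 ∧ ∀ i, A i 0 = u i := by
  classical
  have card_eq : Module.finrank ℝ (EuclideanSpace ℝ (Fin (m + 1)))
      = Fintype.card (Fin (m + 1)) := by simp
  set v : Fin (m + 1) → EuclideanSpace ℝ (Fin (m + 1)) := fun _ => WithLp.toLp 2 u with hv_def
  have hv : Orthonormal ℝ (({0} : Set (Fin (m + 1))).restrict v) := by
    rw [orthonormal_iff_ite]
    intro i j
    have hij : i = j := Subsingleton.elim i j
    subst hij
    simp only [if_pos rfl]
    have h2 : (inner ℝ (v i) (v i) : ℝ) = ∑ k, u k * u k := by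
      simp only [hv_def, PiLp.inner_apply, RCLike.inner_apply, conj_trivial, PiLp.toLp_apply]
    rw [show ({0} : Set (Fin (m + 1))).restrict v i = v i from rfl, h2]
    simpa [sq] using hu
  obtain ⟨b, hb⟩ := hv.exists_orthonormalBasis_extension_of_card_eq card_eq
  have hb0 : b 0 = WithLp.toLp 2 u := hb 0 rfl
  set a := EuclideanSpace.basisFun (Fin (m + 1)) ℝ with ha_def
  -- the matrix whose columns are the basis vectors
  have hcol : ∀ (c : OrthonormalBasis (Fin (m+1)) ℝ (EuclideanSpace ℝ (Fin (m+1)))) i j,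
      a.toBasis.toMatrix c i j = c j i := by
    intro c i j
    rw [Module.Basis.toMatrix_apply, OrthonormalBasis.coe_toBasis_repr_apply]
    rfl
  have hT : ∀ (c : OrthonormalBasis (Fin (m+1)) ℝ (EuclideanSpace ℝ (Fin (m+1)))),
      (a.toBasis.toMatrix c)ᵀ * (a.toBasis.toMatrix c) = 1 := by
    intro c
    have h1 := a.toMatrix_orthonormalBasis_conjTranspose_mul_self c
    have h2 : (a.toBasis.toMatrix c)ᴴ = (a.toBasis.toMatrix c)ᵀ := by
      ext i j; simp [Matrix.conjTranspose_apply]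
    rwa [h2] at h1
  set A₀ := a.toBasis.toMatrix b with hA₀_def
  have hdet : A₀.det = 1 ∨ A₀.det = -1 := by
    have h1 : A₀.det * A₀.det = 1 := by
      have := congrArg Matrix.det (hT b)
      rwa [Matrix.det_mul, Matrix.det_transpose, Matrix.det_one] at this
    exact mul_self_eq_one_iff.mp h1
  rcases hdet with hdet | hdet
  · exact ⟨A₀, hT b, hdet, fun i => (hcol b i 0).trans (by rw [hb0])⟩
  · -- fix the determinant by negating the last column
    set D : Matrix (Fin (m+1)) (Fin (m+1)) ℝ :=
      Matrix.diagonal (fun j => if j = Fin.last m then (-1 : ℝ) else 1) with hD_def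
    have hD2 : D * D = 1 := by
      rw [hD_def, Matrix.diagonal_mul_diagonal]
      have hfun : (fun i => (if i = Fin.last m then (-1:ℝ) else 1) *
          (if i = Fin.last m then (-1:ℝ) else 1)) = fun _ => (1:ℝ) := by
        funext i
        by_cases h : i = Fin.last m <;> simp [h]
      rw [hfun, Matrix.diagonal_one]
    have hDT : Dᵀ = D := Matrix.diagonal_transpose _
    have hDdet : D.det = -1 := by
      rw [hD_def, Matrix.det_diagonal, Finset.prod_ite_eq' Finset.univ (Fin.last m) (fun _ => (-1:ℝ))]
      simp
    refine ⟨A₀ * D, ?_, ?_, ?_⟩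
    · rw [Matrix.transpose_mul, hDT, Matrix.mul_assoc, ← Matrix.mul_assoc A₀ᵀ, hT b,
        Matrix.one_mul, hD2]
    · rw [Matrix.det_mul, hdet, hDdet]; ring
    · intro i
      rw [Matrix.mul_diagonal]
      have h0 : (0 : Fin (m+1)) ≠ Fin.last m := by
        intro h
        have := congrArg Fin.val h
        simp [Fin.last] at this
        omega
      rw [if_neg h0, mul_one]
      exact (hcol b i 0).trans (by rw [hb0])

/-- A homogeneous polynomial of degree `d` on `ℝ^{m+1}` invariant under `SO(m+1)` (matrices `A`
with `AᵀA = 1` and `det A = 1`, acting by substitution `x ↦ Ax`) vanishes if `d` is odd, and is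
a scalar multiple of `(x_1² + ⋯ + x_{m+1}²)^k` if `d = 2k` is even. -/
theorem stmt_9 (m d : ℕ) (hm : 1 ≤ m) (P : MvPolynomial (Fin (m + 1)) ℝ)
    (hhom : P.IsHomogeneous d)
    (hinv : ∀ A : Matrix (Fin (m + 1)) (Fin (m + 1)) ℝ, Aᵀ * A = 1 → A.det = 1 →
      MvPolynomial.aeval
        (fun i => ∑ j, A i j • (MvPolynomial.X j : MvPolynomial (Fin (m + 1)) ℝ)) P = P) :
    (Odd d → P = 0) ∧
    (∀ k : ℕ, d = 2 * k →
      ∃ c : ℝ, P = MvPolynomial.C c * (∑ i, MvPolynomial.X i ^ 2) ^ k) := by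
  classical
  set e0 : Fin (m + 1) → ℝ := Pi.single 0 1 with he0_def
  have he0 : ∑ i, e0 i ^ 2 = 1 := by
    simp [he0_def, Pi.single_apply, sq, Finset.sum_ite_eq']
  set c0 : ℝ := MvPolynomial.eval e0 P with hc0_def
  have keyA : ∀ x : Fin (m + 1) → ℝ,
      MvPolynomial.eval x P = c0 * (Real.sqrt (∑ i, x i ^ 2)) ^ d := by
    intro x
    by_cases hx : x = 0
    · subst hx
      have hz : MvPolynomial.eval (0 : Fin (m + 1) → ℝ) P = 0 ^ d * c0 := by
        rw [show (0 : Fin (m + 1) → ℝ) = (0 : ℝ) • e0 from by simp, eval_homog_smul hhom]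
      rw [hz, show ∑ i, (0 : Fin (m + 1) → ℝ) i ^ 2 = 0 from by simp, Real.sqrt_zero]
      ring
    · obtain ⟨i0, hi0⟩ := Function.ne_iff.mp hx
      set S : ℝ := ∑ i, x i ^ 2 with hS_def
      have hS : 0 < S := by
        refine Finset.sum_pos' (fun i _ => sq_nonneg _) ⟨i0, Finset.mem_univ _, ?_⟩
        exact sq_pos_of_ne_zero hi0
      set r : ℝ := Real.sqrt S with hr_def
      have hr : 0 < r := Real.sqrt_pos.mpr hS
      have hr2 : r ^ 2 = S := Real.sq_sqrt hS.le
      set u : Fin (m + 1) → ℝ := r⁻¹ • x with hu_def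
      have hu : ∑ i, u i ^ 2 = 1 := by
        have h1 : ∑ i, u i ^ 2 = r⁻¹ ^ 2 * S := by
          simp [hu_def, mul_pow, Finset.mul_sum, hS_def]
        rw [h1, inv_pow, hr2, inv_mul_cancel₀ hS.ne']
      obtain ⟨A, hA1, hA2, hAcol⟩ := exists_so_col hm u hu
      have hinvA := hinv A hA1 hA2
      have h1 : MvPolynomial.eval u P = c0 := by
        have h2 := congrArg (MvPolynomial.eval e0) hinvA
        rw [eval_aeval'] at h2
        have h3 : (fun i => MvPolynomial.eval e0
            (∑ j, A i j • (MvPolynomial.X j : MvPolynomial (Fin (m + 1)) ℝ))) = u := by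
          funext i
          rw [map_sum]
          have h4 : ∀ j, MvPolynomial.eval e0
              (A i j • (MvPolynomial.X j : MvPolynomial (Fin (m + 1)) ℝ)) = A i j * e0 j := by
            intro j
            rw [MvPolynomial.smul_eval, MvPolynomial.eval_X]
          simp only [h4]
          rw [show ∑ j, A i j * e0 j = A i 0 by
            simp [he0_def, Pi.single_apply, mul_ite, Finset.sum_ite_eq']]
          exact hAcol i
        rw [h3] at h2
        exact h2
      have hx_eq : x = r • u := by
        rw [hu_def, smul_smul, mul_inv_cancel₀ hr.ne', one_smul]
      rw [hx_eq, eval_homog_smul hhom, h1]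
      ring
  constructor
  · -- odd case
    intro hodd
    have h1 : MvPolynomial.eval ((-1 : ℝ) • e0) P = (-1 : ℝ) ^ d * c0 :=
      eval_homog_smul hhom _ _
    have h2 : MvPolynomial.eval ((-1 : ℝ) • e0) P = c0 := by
      rw [keyA]
      rw [show ∑ i, ((-1 : ℝ) • e0) i ^ 2 = 1 by
        simpa [neg_pow, mul_pow] using he0]
      simp
    rw [h2, hodd.neg_one_pow] at h1
    have hc0 : c0 = 0 := by linarith
    apply MvPolynomial.funext (q := 0)
    intro x
    rw [keyA, hc0]
    simp
  · -- even case
    intro k hk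
    refine ⟨c0, MvPolynomial.funext fun x => ?_⟩
    have hrhs : MvPolynomial.eval x
        (MvPolynomial.C c0 * (∑ i, (MvPolynomial.X i : MvPolynomial (Fin (m+1)) ℝ) ^ 2) ^ k)
        = c0 * (∑ i, x i ^ 2) ^ k := by
      rw [_root_.map_mul, map_pow, map_sum]
      simp
    rw [keyA, hrhs, hk, pow_mul, Real.sq_sqrt]
    exact Finset.sum_nonneg fun i _ => sq_nonneg _
end

section
/- Let m ≥ 1 and k ∈ ℕ, and let T be a symmetric tensor of order k on ℝ^{m+1}, i.e. a function T : (Fin k → Fin (m+1)) → ℝ with T(ι∘τ) = T(ι) for every permutation τ of Fin k. Then δ⌟(δ⊙T) = (m+2k+1)·T + δ⊙(δ⌟T), where δ is the Kronecker delta tensor of order 2, ⊙ is the unnormalized symmetric (shuffle) product, and ⌟ is contraction with δ. -/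
noncomputable def symProd {n k l : ℕ} (T₁ : (Fin k → Fin n) → ℝ) (T₂ : (Fin l → Fin n) → ℝ) :
    (Fin (k + l) → Fin n) → ℝ :=
  fun i => ∑ S : {S : Finset (Fin (k + l)) // S.card = k},
    T₁ (fun a => i ((S.1.orderIsoOfFin S.2 a : Fin (k + l)))) *
      T₂ (fun b => i ((S.1ᶜ.orderIsoOfFin
        (by rw [Finset.card_compl, S.2, Fintype.card_fin]; omega) b : Fin (k + l))))

def kdelta (n : ℕ) : (Fin 2 → Fin n) → ℝ := fun i => if i 0 = i 1 then 1 else 0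

noncomputable def contract {n k : ℕ} (T : (Fin k → Fin n) → ℝ) : (Fin (k - 2) → Fin n) → ℝ :=
  if 2 ≤ k then
    fun i => ∑ p : Fin n, T (fun j => if hj : (j : ℕ) < k - 2 then i ⟨j, hj⟩ else p)
  else 0

def castTensor {n a b : ℕ} (h : a = b) (T : (Fin a → Fin n) → ℝ) : (Fin b → Fin n) → ℝ :=
  fun i => T (fun j => i (Fin.cast h j))

/- ### auxiliary lemmas -/

lemma ofFn_coe {α : Type*} {c : ℕ} (f : Fin c → α) :
    (↑(List.ofFn f) : Multiset α) = Multiset.map f (Finset.univ : Finset (Fin c)).val := by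
  show _ = Multiset.map f ↑(List.finRange c)
  rw [List.ofFn_eq_map, Multiset.map_coe]

lemma exists_comp_perm {α : Type*} [LinearOrder α] {c : ℕ} {f g : Fin c → α}
    (h : Multiset.map f (Finset.univ : Finset (Fin c)).val
       = Multiset.map g (Finset.univ : Finset (Fin c)).val) :
    ∃ σ : Equiv.Perm (Fin c), f = g ∘ σ := by
  rw [← ofFn_coe, ← ofFn_coe, Multiset.coe_eq_coe] at h
  have hp : (List.ofFn (f ∘ Tuple.sort f)).Perm (List.ofFn (g ∘ Tuple.sort g)) :=
    ((Equiv.Perm.ofFn_comp_perm _ f).trans h).trans (Equiv.Perm.ofFn_comp_perm _ g).symm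
  have h1 : List.ofFn (f ∘ Tuple.sort f) = List.ofFn (g ∘ Tuple.sort g) :=
    List.Perm.eq_of_sortedLE (Tuple.monotone_sort f).sortedLE_ofFn
      (Tuple.monotone_sort g).sortedLE_ofFn hp
  rw [List.ofFn_inj] at h1
  refine ⟨(Tuple.sort f)⁻¹.trans (Tuple.sort g), ?_⟩
  funext x
  have := congrFun h1 ((Tuple.sort f)⁻¹ x)
  simpa using this

lemma tensor_congr {m k : ℕ} (T : (Fin k → Fin (m + 1)) → ℝ)
    (hsym : ∀ (τ : Equiv.Perm (Fin k)) (ι : Fin k → Fin (m + 1)), T (ι ∘ τ) = T ι)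
    {f g : Fin k → Fin (m + 1)}
    (h : Multiset.map f (Finset.univ : Finset (Fin k)).val
       = Multiset.map g (Finset.univ : Finset (Fin k)).val) : T f = T g := by
  obtain ⟨σ, rfl⟩ := exists_comp_perm h
  exact hsym σ g

lemma enum_multiset {N c : ℕ} (s : Finset (Fin N)) (h : s.card = c) :
    Multiset.map (fun a => ((s.orderIsoOfFin h a) : Fin N)) (Finset.univ : Finset (Fin c)).val
      = s.val := by
  have he : Finset.univ.map (s.orderEmbOfFin h).toEmbedding = s := by
    apply Finset.eq_of_subset_of_card_le
    · intro x hx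
      simp only [Finset.mem_map] at hx
      obtain ⟨a, -, rfl⟩ := hx
      exact s.orderEmbOfFin_mem h a
    · simp [h]
  calc Multiset.map (fun a => ((s.orderIsoOfFin h a) : Fin N)) Finset.univ.val
      = (Finset.univ.map (s.orderEmbOfFin h).toEmbedding).val := by
        rw [Finset.map_val]; rfl
    _ = s.val := by rw [he]

lemma arg_multiset {N c : ℕ} {α : Type*} (ι : Fin N → α) (s : Finset (Fin N)) (h : s.card = c) :
    Multiset.map (fun b => ι ((s.orderIsoOfFin h b : Fin N))) (Finset.univ : Finset (Fin c)).val
      = s.val.map ι := by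
  rw [← enum_multiset s h, Multiset.map_map]; rfl

lemma pair_strictMono {N : ℕ} {a b : Fin N} (hab : a < b) : StrictMono ![a, b] := by
  intro x y hxy
  fin_cases x <;> fin_cases y <;>
    simp_all [Matrix.cons_val_zero, Matrix.cons_val_one]

lemma enum_pair {N : ℕ} {a b : Fin N} (hab : a < b) (h : ({a, b} : Finset (Fin N)).card = 2)
    (x : Fin 2) : ((({a, b} : Finset (Fin N)).orderIsoOfFin h x : Fin N)) = ![a, b] x := by
  have := Finset.orderEmbOfFin_unique h (f := ![a, b]) ?_ (pair_strictMono hab)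
  · rw [Finset.coe_orderIsoOfFin_apply, ← this]
  · intro y; fin_cases y <;> simp

lemma enum_map {N M c : ℕ} (e : Fin N ↪o Fin M) (s : Finset (Fin N)) (h : s.card = c)
    (h2 : (s.map e.toEmbedding).card = c) (x : Fin c) :
    (((s.map e.toEmbedding).orderIsoOfFin h2 x : Fin M)) = e ((s.orderIsoOfFin h x : Fin N)) := by
  have := Finset.orderEmbOfFin_unique h2 (f := fun x => e ((s.orderIsoOfFin h x : Fin N)))
    ?_ ?_
  · rw [Finset.coe_orderIsoOfFin_apply, ← this]
  · intro y
    simp only [Finset.mem_map]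
    exact ⟨_, Finset.orderEmbOfFin_mem s h y, rfl⟩
  · intro x y hxy
    exact e.strictMono ((s.orderIsoOfFin h).strictMono hxy)

/- ### the building blocks of the main proof -/

/-- the index extension operator -/
noncomputable def Eext {m k : ℕ} (i : Fin k → Fin (m + 1)) (p : Fin (m + 1)) :
    Fin (2 + k) → Fin (m + 1) :=
  fun j => if h : (j : ℕ) < k then i ⟨(j : ℕ), h⟩ else p

/-- the generic summand -/
noncomputable def Gfun (m k : ℕ) (T : (Fin k → Fin (m + 1)) → ℝ) (i : Fin k → Fin (m + 1))
    (S : {S : Finset (Fin (2 + k)) // S.card = 2}) : ℝ :=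
  ∑ p : Fin (m + 1),
    kdelta (m + 1) (fun a => Eext i p ((S.1.orderIsoOfFin S.2 a : Fin (2 + k)))) *
      T (fun b => Eext i p ((S.1ᶜ.orderIsoOfFin
        (by rw [Finset.card_compl, S.2, Fintype.card_fin]; omega) b : Fin (2 + k))))

def fe0 (k : ℕ) : Fin (2 + k) := ⟨k, by omega⟩
def fe1 (k : ℕ) : Fin (2 + k) := ⟨k + 1, by omega⟩

@[simp] lemma fe0_val (k : ℕ) : ((fe0 k) : ℕ) = k := rfl
@[simp] lemma fe1_val (k : ℕ) : ((fe1 k) : ℕ) = k + 1 := rfl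

lemma lhs_eq (m k : ℕ) (T : (Fin k → Fin (m + 1)) → ℝ) (i : Fin k → Fin (m + 1)) :
    contract (castTensor (by omega : 2 + k = k + 2) (symProd (kdelta (m + 1)) T)) i
      = ∑ S : {S : Finset (Fin (2 + k)) // S.card = 2}, Gfun m k T i S := by
  rw [contract.eq_def]
  rw [if_pos (show (2 : ℕ) ≤ k + 2 by omega)]
  simp only [castTensor, symProd, Fin.coe_cast, Nat.add_sub_cancel]
  rw [Finset.sum_comm]
  rfl

set_option maxRecDepth 10000 in
lemma classA (m k : ℕ) (T : (Fin k → Fin (m + 1)) → ℝ) (i : Fin k → Fin (m + 1)) :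
    ∑ S ∈ Finset.univ.filter
      (fun S : {S : Finset (Fin (2 + k)) // S.card = 2} => fe0 k ∈ S.1 ∧ fe1 k ∈ S.1),
      Gfun m k T i S = ((m : ℝ) + 1) * T i := by
  have hne : fe0 k ≠ fe1 k := by
    intro h
    have := congrArg Fin.val h
    simp only [fe0_val, fe1_val] at this
    omega
  have hpair : ({fe0 k, fe1 k} : Finset (Fin (2 + k))).card = 2 := by
    rw [Finset.card_insert_of_notMem (by simpa using hne), Finset.card_singleton]
  have hfilter : Finset.univ.filter
      (fun S : {S : Finset (Fin (2 + k)) // S.card = 2} => fe0 k ∈ S.1 ∧ fe1 k ∈ S.1)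
      = {⟨{fe0 k, fe1 k}, hpair⟩} := by
    ext S
    simp only [Finset.mem_filter, Finset.mem_univ, true_and, Finset.mem_singleton]
    constructor
    · rintro ⟨h0, h1⟩
      have hsub : ({fe0 k, fe1 k} : Finset (Fin (2 + k))) ⊆ S.1 := by
        intro x hx
        rcases Finset.mem_insert.1 hx with rfl | hx
        · exact h0
        · rw [Finset.mem_singleton] at hx; subst hx; exact h1
      have := Finset.eq_of_subset_of_card_le hsub (by rw [S.2, hpair])
      exact Subtype.ext this.symm
    · rintro rfl
      exact ⟨Finset.mem_insert_self _ _, Finset.mem_insert_of_mem (Finset.mem_singleton_self _)⟩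
  rw [hfilter, Finset.sum_singleton]
  simp only [Gfun]
  have hccard : (({fe0 k, fe1 k} : Finset (Fin (2 + k)))ᶜ).card = k := by
    rw [Finset.card_compl, hpair, Fintype.card_fin]; omega
  -- the complement is enumerated by the canonical embedding
  have henumC : ∀ b : Fin k,
      ((({fe0 k, fe1 k} : Finset (Fin (2 + k)))ᶜ.orderIsoOfFin hccard b : Fin (2 + k)))
        = ⟨(b : ℕ), by omega⟩ := by
    have := Finset.orderEmbOfFin_unique hccard
      (f := fun b : Fin k => (⟨(b : ℕ), by omega⟩ : Fin (2 + k))) ?_ ?_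
    · intro b; rw [Finset.coe_orderIsoOfFin_apply, ← this]
    · intro y
      simp only [Finset.mem_compl, Finset.mem_insert, Finset.mem_singleton]
      push_neg
      refine ⟨fun h => ?_, fun h => ?_⟩ <;>
      · have := congrArg Fin.val h
        simp only [fe0_val, fe1_val] at this
        omega
    · intro x y hxy
      exact hxy
  calc (∑ p : Fin (m + 1),
        kdelta (m + 1) (fun a => Eext i p
          ((({fe0 k, fe1 k} : Finset (Fin (2 + k))).orderIsoOfFin hpair a : Fin (2 + k)))) *
        T (fun b => Eext i p ((({fe0 k, fe1 k} : Finset (Fin (2 + k)))ᶜ.orderIsoOfFin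
          (by rw [Finset.card_compl, hpair, Fintype.card_fin]; omega) b : Fin (2 + k)))))
      = ∑ _p : Fin (m + 1), T i := by
        refine Finset.sum_congr rfl fun p _ => ?_
        have hδ : (kdelta (m + 1) (fun a => Eext i p
            ((({fe0 k, fe1 k} : Finset (Fin (2 + k))).orderIsoOfFin hpair a : Fin (2 + k))))) = 1 := by
          have hval : ∀ a : Fin 2, Eext i p
              ((({fe0 k, fe1 k} : Finset (Fin (2 + k))).orderIsoOfFin hpair a : Fin (2 + k))) = p := by
            intro a
            have hmem := Finset.orderEmbOfFin_mem ({fe0 k, fe1 k} : Finset (Fin (2 + k))) hpair a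
            rw [← Finset.coe_orderIsoOfFin_apply] at hmem
            rw [Eext, dif_neg]
            rcases Finset.mem_insert.1 hmem with h | h
            · rw [h]; simp only [fe0_val]; omega
            · rw [Finset.mem_singleton] at h; rw [h]; simp only [fe1_val]; omega
          rw [kdelta]
          simp only [hval]
          simp
        have hT : (fun b => Eext i p ((({fe0 k, fe1 k} : Finset (Fin (2 + k)))ᶜ.orderIsoOfFin
            (by rw [Finset.card_compl, hpair, Fintype.card_fin]; omega) b : Fin (2 + k)))) = i := by
          funext b
          rw [henumC b, Eext, dif_pos (show ((⟨(b : ℕ), by omega⟩ : Fin (2+k)) : ℕ) < k from b.2)]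
        rw [hδ, hT, one_mul]
    _ = ((m : ℝ) + 1) * T i := by
        rw [Finset.sum_const, Finset.card_univ, Fintype.card_fin, nsmul_eq_mul]
        push_cast; ring

lemma classB (m k : ℕ) (T : (Fin k → Fin (m + 1)) → ℝ)
    (hsym : ∀ (τ : Equiv.Perm (Fin k)) (ι : Fin k → Fin (m + 1)), T (ι ∘ τ) = T ι)
    (i : Fin k → Fin (m + 1)) (t t' : Fin (2 + k))
    (htt' : (t : ℕ) = k ∧ (t' : ℕ) = k + 1 ∨ (t : ℕ) = k + 1 ∧ (t' : ℕ) = k) :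
    ∑ S ∈ Finset.univ.filter
      (fun S : {S : Finset (Fin (2 + k)) // S.card = 2} => t ∈ S.1 ∧ t' ∉ S.1),
      Gfun m k T i S = (k : ℝ) * T i := by
  have htk : k ≤ (t : ℕ) := by rcases htt' with ⟨h, _⟩ | ⟨h, _⟩ <;> omega
  have ht'k : k ≤ (t' : ℕ) := by rcases htt' with ⟨_, h⟩ | ⟨_, h⟩ <;> omega
  have htne : (t : ℕ) ≠ (t' : ℕ) := by rcases htt' with ⟨h, h'⟩ | ⟨h, h'⟩ <;> omega
  have hcard : ∀ a : Fin k,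
      ({(⟨(a : ℕ), by omega⟩ : Fin (2 + k)), t} : Finset (Fin (2 + k))).card = 2 := by
    intro a
    rw [Finset.card_insert_of_notMem, Finset.card_singleton]
    simp only [Finset.mem_singleton]
    intro h
    have := congrArg Fin.val h
    simp only at this
    omega
  have key := Finset.sum_bij (s := (Finset.univ : Finset (Fin k)))
    (t := Finset.univ.filter
      (fun S : {S : Finset (Fin (2 + k)) // S.card = 2} => t ∈ S.1 ∧ t' ∉ S.1))
    (f := fun _ => T i) (g := fun S => Gfun m k T i S)
    (i := fun a _ => (⟨{⟨(a : ℕ), by omega⟩, t}, hcard a⟩ : {S : Finset (Fin (2 + k)) // S.card = 2}))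
    ?_ ?_ ?_ ?_
  · rw [← key, Finset.sum_const, Finset.card_univ, Fintype.card_fin, nsmul_eq_mul]
  -- membership
  · intro a _
    simp only [Finset.mem_filter, Finset.mem_univ, true_and]
    constructor
    · exact Finset.mem_insert_of_mem (Finset.mem_singleton_self t)
    · simp only [Finset.mem_insert, Finset.mem_singleton]
      push_neg
      constructor
      · intro h; have := congrArg Fin.val h; simp only at this; omega
      · intro h; exact htne (congrArg Fin.val h.symm)
  -- injectivity
  · intro a _ b _ h
    have h1 : ({(⟨(a : ℕ), by omega⟩ : Fin (2 + k)), t} : Finset (Fin (2 + k)))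
        = {(⟨(b : ℕ), by omega⟩ : Fin (2 + k)), t} := congrArg Subtype.val h
    have h2 : (⟨(a : ℕ), by omega⟩ : Fin (2 + k)) ∈
        ({(⟨(b : ℕ), by omega⟩ : Fin (2 + k)), t} : Finset (Fin (2 + k))) := by
      rw [← h1]; exact Finset.mem_insert_self _ _
    rcases Finset.mem_insert.1 h2 with h3 | h3
    · have := congrArg Fin.val h3; simp only at this; exact Fin.ext this
    · rw [Finset.mem_singleton] at h3
      have := congrArg Fin.val h3; simp only at this; omega
  -- surjectivity
  · intro S hS
    simp only [Finset.mem_filter, Finset.mem_univ, true_and] at hS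
    obtain ⟨htS, ht'S⟩ := hS
    have h1 : (S.1.erase t).card = 1 := by rw [Finset.card_erase_of_mem htS, S.2]
    obtain ⟨c, hc⟩ := Finset.card_eq_one.1 h1
    have hcS : c ∈ S.1 := (Finset.erase_subset _ _) (hc ▸ Finset.mem_singleton_self c)
    have hct : c ≠ t := Finset.ne_of_mem_erase (hc ▸ Finset.mem_singleton_self c)
    have hcval : (c : ℕ) < k := by
      have h2k : (c : ℕ) < 2 + k := c.2
      have hne' : c ≠ t' := fun h => ht'S (h ▸ hcS)
      have hv1 : (c : ℕ) ≠ (t : ℕ) := fun h => hct (Fin.ext h)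
      have hv2 : (c : ℕ) ≠ (t' : ℕ) := fun h => hne' (Fin.ext h)
      rcases htt' with ⟨h, h'⟩ | ⟨h, h'⟩ <;> omega
    refine ⟨⟨(c : ℕ), hcval⟩, Finset.mem_univ _, ?_⟩
    apply Subtype.ext
    show ({(⟨(c : ℕ), _⟩ : Fin (2 + k)), t} : Finset (Fin (2 + k))) = S.1
    have hmk : (⟨(c : ℕ), by omega⟩ : Fin (2 + k)) = c := rfl
    rw [hmk, Finset.pair_comm, show ({t, c} : Finset (Fin (2 + k))) = insert t {c} from rfl,
      ← hc, Finset.insert_erase htS]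
  -- values
  · intro a _
    have hlt : (⟨(a : ℕ), by omega⟩ : Fin (2 + k)) < t := by
      show (a : ℕ) < (t : ℕ); omega
    have henum := enum_pair hlt (hcard a)
    symm
    simp only [Gfun]
    have hδ : ∀ p : Fin (m + 1),
        (kdelta (m + 1) (fun x => Eext i p
          ((({(⟨(a : ℕ), by omega⟩ : Fin (2 + k)), t} : Finset (Fin (2 + k))).orderIsoOfFin
            (hcard a) x : Fin (2 + k))))) = if i a = p then 1 else 0 := by
      intro p
      rw [kdelta]
      simp only [henum, Matrix.cons_val_zero, Matrix.cons_val_one, Matrix.head_cons]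
      have e0 : Eext i p (⟨(a : ℕ), by omega⟩ : Fin (2 + k)) = i a := by
        rw [Eext, dif_pos (show ((⟨(a : ℕ), by omega⟩ : Fin (2 + k)) : ℕ) < k from a.2)]
      have e1 : Eext i p t = p := by
        rw [Eext, dif_neg (show ¬ ((t : ℕ) < k) by omega)]
      rw [e0, e1]
    simp only [hδ]
    rw [Finset.sum_eq_single (i a)]
    · rw [if_pos rfl, one_mul]
      apply tensor_congr T hsym
      rw [arg_multiset]
      have hcompl : (({(⟨(a : ℕ), by omega⟩ : Fin (2 + k)), t} : Finset (Fin (2 + k)))ᶜ)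
          = insert t' ((Finset.univ.erase a).map
              (Fin.castLEOrderEmb (show k ≤ 2 + k by omega)).toEmbedding) := by
        ext x
        simp only [Finset.mem_compl, Finset.mem_insert, Finset.mem_singleton,
          Finset.mem_map, Finset.mem_erase, Finset.mem_univ, and_true,
          RelEmbedding.coe_toEmbedding, Fin.castLEOrderEmb_apply]
        push_neg
        constructor
        · rintro ⟨hx1, hx2⟩
          by_cases hxk : (x : ℕ) < k
          · right
            refine ⟨⟨(x : ℕ), hxk⟩, ?_, Fin.ext rfl⟩
            intro h
            have := congrArg Fin.val h
            simp only at this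
            exact hx1 (Fin.ext (show (x : ℕ) = (a : ℕ) by omega))
          · left
            have hx2' := x.2
            have hv : (x : ℕ) ≠ (t : ℕ) := fun hh => hx2 (Fin.ext hh)
            refine Fin.ext ?_
            rcases htt' with ⟨h, h'⟩ | ⟨h, h'⟩ <;> omega
        · rintro (rfl | ⟨y, hy, rfl⟩)
          · constructor
            · intro h; have := congrArg Fin.val h; simp only at this; omega
            · intro h; exact htne (congrArg Fin.val h.symm)
          · constructor
            · intro h
              have := congrArg Fin.val h
              simp only [Fin.coe_castLE] at this
              exact hy (Fin.ext this)
            · intro h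
              have := congrArg Fin.val h
              simp only [Fin.coe_castLE] at this
              omega
      rw [hcompl]
      have hnm : t' ∉ (Finset.univ.erase a).map
          (Fin.castLEOrderEmb (show k ≤ 2 + k by omega)).toEmbedding := by
        simp only [Finset.mem_map, Finset.mem_erase, Finset.mem_univ, and_true,
          RelEmbedding.coe_toEmbedding, Fin.castLEOrderEmb_apply]
        rintro ⟨y, hy, hEq⟩
        have := congrArg Fin.val hEq
        simp only [Fin.coe_castLE] at this
        omega
      rw [Finset.insert_val_of_notMem hnm, Multiset.map_cons, Finset.map_val,
        Multiset.map_map]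
      have h1 : Eext i (i a) t' = i a := by
        rw [Eext, dif_neg (show ¬ ((t' : ℕ) < k) by omega)]
      have h2 : (Eext i (i a)) ∘ (Fin.castLEOrderEmb (show k ≤ 2 + k by omega)).toEmbedding
          = i := by
        funext y
        show Eext i (i a) (Fin.castLE (show k ≤ 2 + k by omega) y) = i y
        rw [Eext,
          dif_pos (show ((Fin.castLE (show k ≤ 2 + k by omega) y : Fin (2 + k)) : ℕ) < k from y.2)]
        exact congrArg i (Fin.ext rfl)
      rw [h1, h2]
      have huniv : (Finset.univ : Finset (Fin k)).val
          = a ::ₘ (Finset.univ.erase a).val := by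
        rw [Finset.erase_val]
        exact (Multiset.cons_erase (Finset.mem_def.1 (Finset.mem_univ a))).symm
      rw [huniv, Multiset.map_cons]
    · intro b _ hb
      rw [if_neg (Ne.symm hb), zero_mul]
    · intro h; exact absurd (Finset.mem_univ _) h

lemma extend_multiset (m K : ℕ) (hK : 2 ≤ K) (ι : Fin (K - 2) → Fin (m + 1)) (p : Fin (m + 1)) :
    Multiset.map (fun j : Fin K => if hj : (j : ℕ) < K - 2 then ι ⟨(j : ℕ), hj⟩ else p)
      Finset.univ.val = p ::ₘ p ::ₘ Multiset.map ι Finset.univ.val := by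
  have he1' : (⟨K - 1, by omega⟩ : Fin K) ∉
      ((Finset.univ : Finset (Fin (K - 2))).map
        (Fin.castLEOrderEmb (show K - 2 ≤ K by omega)).toEmbedding) := by
    simp only [Finset.mem_map, Finset.mem_univ, true_and,
      RelEmbedding.coe_toEmbedding, Fin.castLEOrderEmb_apply]
    rintro ⟨y, h⟩
    have := congrArg Fin.val h
    simp only [Fin.coe_castLE] at this
    have := y.2
    omega
  have he0' : (⟨K - 2, by omega⟩ : Fin K) ∉ insert (⟨K - 1, by omega⟩ : Fin K)
      ((Finset.univ : Finset (Fin (K - 2))).map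
        (Fin.castLEOrderEmb (show K - 2 ≤ K by omega)).toEmbedding) := by
    simp only [Finset.mem_insert, Finset.mem_map, Finset.mem_univ, true_and,
      RelEmbedding.coe_toEmbedding, Fin.castLEOrderEmb_apply]
    push_neg
    constructor
    · intro h; have := congrArg Fin.val h; simp only at this; omega
    · intro y h
      have := congrArg Fin.val h
      simp only [Fin.coe_castLE] at this
      have := y.2
      omega
  have huniv : (Finset.univ : Finset (Fin K))
      = insert (⟨K - 2, by omega⟩ : Fin K) (insert (⟨K - 1, by omega⟩ : Fin K)
          ((Finset.univ : Finset (Fin (K - 2))).map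
            (Fin.castLEOrderEmb (show K - 2 ≤ K by omega)).toEmbedding)) := by
    symm
    apply Finset.eq_univ_of_card
    rw [Finset.card_insert_of_notMem he0', Finset.card_insert_of_notMem he1',
      Finset.card_map, Finset.card_univ, Fintype.card_fin, Fintype.card_fin]
    omega
  rw [huniv, Finset.insert_val_of_notMem he0', Finset.insert_val_of_notMem he1',
    Multiset.map_cons, Multiset.map_cons, Finset.map_val, Multiset.map_map]
  congr 1
  · exact dif_neg (Nat.lt_irrefl (K - 2))
  congr 1
  · exact dif_neg (show ¬ (K - 1 < K - 2) by omega)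
  · apply Multiset.map_congr rfl
    intro y _
    exact dif_pos y.2

lemma classC (m k : ℕ) (T : (Fin k → Fin (m + 1)) → ℝ)
    (hsym : ∀ (τ : Equiv.Perm (Fin k)) (ι : Fin k → Fin (m + 1)), T (ι ∘ τ) = T ι)
    (i : Fin k → Fin (m + 1)) :
    ∑ S ∈ Finset.univ.filter
      (fun S : {S : Finset (Fin (2 + k)) // S.card = 2} => fe0 k ∉ S.1 ∧ fe1 k ∉ S.1),
      Gfun m k T i S =
      (if h : 2 ≤ k then
        castTensor (by omega : 2 + (k - 2) = k) (symProd (kdelta (m + 1)) (contract T)) i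
      else 0) := by
  by_cases hk : 2 ≤ k
  case neg =>
    rw [dif_neg hk]
    have hempty : Finset.univ.filter
        (fun S : {S : Finset (Fin (2 + k)) // S.card = 2} => fe0 k ∉ S.1 ∧ fe1 k ∉ S.1) = ∅ := by
      apply Finset.eq_empty_of_forall_notMem
      intro S hS
      simp only [Finset.mem_filter, Finset.mem_univ, true_and] at hS
      obtain ⟨h0, h1⟩ := hS
      have hsub : S.1 ⊆ Finset.univ.map
          (Fin.castLEOrderEmb (show k ≤ 2 + k by omega)).toEmbedding := by
        intro x hx
        simp only [Finset.mem_map, Finset.mem_univ, true_and,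
          RelEmbedding.coe_toEmbedding, Fin.castLEOrderEmb_apply]
        have hx2 := x.2
        have hv0 : (x : ℕ) ≠ k := fun h => h0 (by rw [← Fin.ext (show (x : ℕ) = ((fe0 k : Fin (2+k)) : ℕ) from h)]; exact hx)
        have hv1 : (x : ℕ) ≠ k + 1 := fun h => h1 (by rw [← Fin.ext (show (x : ℕ) = ((fe1 k : Fin (2+k)) : ℕ) from h)]; exact hx)
        have hxval : (x : ℕ) < k := by omega
        exact ⟨⟨(x : ℕ), hxval⟩, Fin.ext rfl⟩
      have hle := Finset.card_le_card hsub
      rw [S.2, Finset.card_map, Finset.card_univ, Fintype.card_fin] at hle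
      omega
    rw [hempty, Finset.sum_empty]
  case pos =>
    rw [dif_pos hk]
    simp only [castTensor, symProd]
    have hk22 : 2 + (k - 2) = k := by omega
    have hcast : k ≤ 2 + k := by omega
    have hcast2 : 2 + (k - 2) ≤ 2 + k := by omega
    refine (Finset.sum_bij
      (s := (Finset.univ : Finset {S : Finset (Fin (2 + (k - 2))) // S.card = 2}))
      (i := fun S' _ =>
        (⟨S'.1.map (Fin.castLEOrderEmb hcast2).toEmbedding,
          by rw [Finset.card_map, S'.2]⟩ : {S : Finset (Fin (2 + k)) // S.card = 2}))
      ?_ ?_ ?_ ?_).symm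
    -- membership
    · intro S' _
      simp only [Finset.mem_filter, Finset.mem_univ, true_and]
      constructor <;>
      · intro hmem
        simp only [Finset.mem_map, RelEmbedding.coe_toEmbedding,
          Fin.castLEOrderEmb_apply] at hmem
        obtain ⟨y, -, hEq⟩ := hmem
        have := congrArg Fin.val hEq
        simp only [Fin.coe_castLE, fe0_val, fe1_val] at this
        have := y.2
        omega
    -- injectivity
    · intro a _ b _ h
      exact Subtype.ext (Finset.map_injective _ (congrArg Subtype.val h))
    -- surjectivity
    · intro S hS
      simp only [Finset.mem_filter, Finset.mem_univ, true_and] at hS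
      obtain ⟨h0, h1⟩ := hS
      have hval : ∀ x ∈ S.1, (x : ℕ) < 2 + (k - 2) := by
        intro x hx
        have hx2 := x.2
        have hv0 : (x : ℕ) ≠ k := fun h => h0 (by
          rw [← Fin.ext (show (x : ℕ) = ((fe0 k : Fin (2+k)) : ℕ) from h)]; exact hx)
        have hv1 : (x : ℕ) ≠ k + 1 := fun h => h1 (by
          rw [← Fin.ext (show (x : ℕ) = ((fe1 k : Fin (2+k)) : ℕ) from h)]; exact hx)
        omega
      have hmapeq : (Finset.univ.filter
            (fun y : Fin (2 + (k - 2)) => Fin.castLE hcast2 y ∈ S.1)).map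
            (Fin.castLEOrderEmb hcast2).toEmbedding = S.1 := by
        ext x
        simp only [Finset.mem_map, Finset.mem_filter, Finset.mem_univ, true_and,
          RelEmbedding.coe_toEmbedding, Fin.castLEOrderEmb_apply]
        constructor
        · rintro ⟨y, hy, rfl⟩; exact hy
        · intro hx
          refine ⟨⟨(x : ℕ), hval x hx⟩, ?_, Fin.ext rfl⟩
          have : Fin.castLE hcast2 (⟨(x : ℕ), hval x hx⟩ : Fin (2 + (k - 2))) = x :=
            Fin.ext rfl
          rw [this]; exact hx
      refine ⟨⟨Finset.univ.filter
        (fun y : Fin (2 + (k - 2)) => Fin.castLE hcast2 y ∈ S.1), ?_⟩, Finset.mem_univ _,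
        Subtype.ext hmapeq⟩
      have := congrArg Finset.card hmapeq
      rw [Finset.card_map, S.2] at this
      exact this
    -- values
    · intro S' _
      have hpf2 : (S'.1.map (Fin.castLEOrderEmb hcast2).toEmbedding).card = 2 := by
        rw [Finset.card_map, S'.2]
      have henum := enum_map (Fin.castLEOrderEmb hcast2) S'.1 S'.2 hpf2
      simp only [Gfun]
      -- rewrite the kdelta factor
      have hkd : ∀ p : Fin (m + 1),
          (kdelta (m + 1) (fun a => Eext i p
            (((S'.1.map (Fin.castLEOrderEmb hcast2).toEmbedding).orderIsoOfFin hpf2 a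
              : Fin (2 + k)))))
          = kdelta (m + 1) (fun a => i (Fin.cast (by omega : 2 + (k - 2) = k)
              ((S'.1.orderIsoOfFin S'.2 a : Fin (2 + (k - 2)))))) := by
        intro p
        apply congrArg
        funext a
        rw [henum a]
        simp only [Fin.castLEOrderEmb_apply]
        have hlt : ((Fin.castLE hcast2 ((S'.1.orderIsoOfFin S'.2 a : Fin (2 + (k - 2))))
            : Fin (2 + k)) : ℕ) < k :=
          lt_of_lt_of_le ((S'.1.orderIsoOfFin S'.2 a : Fin (2 + (k - 2)))).2 (by omega)
        rw [Eext, dif_pos hlt]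
        exact congrArg i (Fin.ext rfl)
      simp only [hkd]
      rw [← Finset.mul_sum]
      rw [contract.eq_def, if_pos hk]
      beta_reduce
      congr 1
      refine Finset.sum_congr rfl fun p _ => ?_
      symm
      apply tensor_congr T hsym
      rw [arg_multiset]
      -- complement identity
      have hne01 : fe0 k ≠ fe1 k := by
        intro h; have := congrArg Fin.val h; simp only [fe0_val, fe1_val] at this; omega
      have hnm0 : ∀ (s : Finset (Fin (2 + (k - 2)))), fe0 k ∉ s.map
          (Fin.castLEOrderEmb hcast2).toEmbedding := by
        intro s h
        simp only [Finset.mem_map, RelEmbedding.coe_toEmbedding,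
          Fin.castLEOrderEmb_apply] at h
        obtain ⟨y, -, hEq⟩ := h
        have := congrArg Fin.val hEq
        simp only [Fin.coe_castLE, fe0_val] at this
        have := y.2
        omega
      have hnm1 : ∀ (s : Finset (Fin (2 + (k - 2)))), fe1 k ∉ s.map
          (Fin.castLEOrderEmb hcast2).toEmbedding := by
        intro s h
        simp only [Finset.mem_map, RelEmbedding.coe_toEmbedding,
          Fin.castLEOrderEmb_apply] at h
        obtain ⟨y, -, hEq⟩ := h
        have := congrArg Fin.val hEq
        simp only [Fin.coe_castLE, fe1_val] at this
        have := y.2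
        omega
      have hcompl : (S'.1.map (Fin.castLEOrderEmb hcast2).toEmbedding)ᶜ
          = insert (fe0 k) (insert (fe1 k)
              ((S'.1ᶜ).map (Fin.castLEOrderEmb hcast2).toEmbedding)) := by
        ext x
        simp only [Finset.mem_compl, Finset.mem_insert, Finset.mem_map,
          RelEmbedding.coe_toEmbedding, Fin.castLEOrderEmb_apply]
        constructor
        · intro hx
          by_cases hxk : (x : ℕ) < 2 + (k - 2)
          · right; right
            refine ⟨⟨(x : ℕ), hxk⟩, ?_, Fin.ext rfl⟩
            intro hmem
            apply hx
            exact ⟨⟨(x : ℕ), hxk⟩, hmem, Fin.ext rfl⟩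
          · have hx2 := x.2
            rcases (show (x : ℕ) = k ∨ (x : ℕ) = k + 1 by omega) with h | h
            · left; exact Fin.ext (show (x : ℕ) = k from h)
            · right; left; exact Fin.ext (show (x : ℕ) = k + 1 from h)
        · rintro (rfl | rfl | ⟨y, hy, rfl⟩)
          · rintro ⟨z, -, hEq⟩
            have := congrArg Fin.val hEq
            simp only [Fin.coe_castLE, fe0_val] at this
            have := z.2
            omega
          · rintro ⟨z, -, hEq⟩
            have := congrArg Fin.val hEq
            simp only [Fin.coe_castLE, fe1_val] at this
            have := z.2
            omega
          · rintro ⟨z, hz, hEq⟩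
            have := congrArg Fin.val hEq
            simp only [Fin.coe_castLE] at this
            exact hy (by rwa [show z = y from Fin.ext this] at hz)
      rw [hcompl]
      have hnm1' : fe1 k ∉ (S'.1ᶜ).map (Fin.castLEOrderEmb hcast2).toEmbedding := hnm1 _
      have hnm0' : fe0 k ∉ insert (fe1 k)
          ((S'.1ᶜ).map (Fin.castLEOrderEmb hcast2).toEmbedding) := by
        simp only [Finset.mem_insert]
        push_neg
        exact ⟨hne01, hnm0 _⟩
      rw [Finset.insert_val_of_notMem hnm0', Finset.insert_val_of_notMem hnm1',
        Multiset.map_cons, Multiset.map_cons, Finset.map_val, Multiset.map_map]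
      have hEfe0 : Eext i p (fe0 k) = p := by
        rw [Eext, dif_neg (show ¬ ((fe0 k : Fin (2 + k)) : ℕ) < k by simp)]
      have hEfe1 : Eext i p (fe1 k) = p := by
        rw [Eext, dif_neg (show ¬ ((fe1 k : Fin (2 + k)) : ℕ) < k by simp)]
      have hEcomp : (Eext i p) ∘ (Fin.castLEOrderEmb hcast2).toEmbedding
          = fun y : Fin (2 + (k - 2)) => i (Fin.cast (by omega : 2 + (k - 2) = k) y) := by
        funext y
        show Eext i p (Fin.castLE hcast2 y) = _
        rw [Eext, dif_pos (show ((Fin.castLE hcast2 y : Fin (2 + k)) : ℕ) < k from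
          lt_of_lt_of_le y.2 (by omega))]
        exact congrArg i (Fin.ext rfl)
      rw [hEfe0, hEfe1, hEcomp]
      have hcc : (S'.1ᶜ).card = k - 2 := by
        rw [Finset.card_compl, S'.2, Fintype.card_fin]; omega
      refine Eq.symm ((extend_multiset m k hk
        (fun b => i (Fin.cast (show 2 + (k - 2) = k by omega)
          ((S'.1ᶜ.orderIsoOfFin hcc b : Fin (2 + (k - 2)))))) p).trans ?_)
      congr 1
      congr 1
      exact arg_multiset (fun y => i (Fin.cast (show 2 + (k - 2) = k by omega) y)) S'.1ᶜ hcc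

/-- For a symmetric tensor `T` of order `k` on `ℝ^{m+1}`:
`δ⌟(δ⊙T) = (m+2k+1)·T + δ⊙(δ⌟T)` (where `δ⌟T := 0` if `k < 2`). -/
theorem stmt_10 (m k : ℕ) (hm : 1 ≤ m) (T : (Fin k → Fin (m + 1)) → ℝ)
    (hsym : ∀ (τ : Equiv.Perm (Fin k)) (ι : Fin k → Fin (m + 1)), T (ι ∘ τ) = T ι) :
    contract (castTensor (by omega : 2 + k = k + 2) (symProd (kdelta (m + 1)) T)) =
      fun i => ((m : ℝ) + 2 * k + 1) * T i +
        (if h : 2 ≤ k then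
          castTensor (by omega : 2 + (k - 2) = k)
            (symProd (kdelta (m + 1)) (contract T)) i
        else 0) := by
  funext i
  rw [lhs_eq m k T i]
  rw [← Finset.sum_filter_add_sum_filter_not Finset.univ
    (fun S : {S : Finset (Fin (2 + k)) // S.card = 2} => fe0 k ∈ S.1) (Gfun m k T i)]
  rw [← Finset.sum_filter_add_sum_filter_not
    (Finset.univ.filter (fun S : {S : Finset (Fin (2 + k)) // S.card = 2} => fe0 k ∈ S.1))
    (fun S => fe1 k ∈ S.1) (Gfun m k T i)]
  rw [← Finset.sum_filter_add_sum_filter_not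
    (Finset.univ.filter (fun S : {S : Finset (Fin (2 + k)) // S.card = 2} => ¬ fe0 k ∈ S.1))
    (fun S => fe1 k ∈ S.1) (Gfun m k T i)]
  rw [Finset.filter_filter, Finset.filter_filter, Finset.filter_filter, Finset.filter_filter]
  have hswap : Finset.univ.filter
      (fun S : {S : Finset (Fin (2 + k)) // S.card = 2} => ¬ fe0 k ∈ S.1 ∧ fe1 k ∈ S.1)
      = Finset.univ.filter
      (fun S : {S : Finset (Fin (2 + k)) // S.card = 2} => fe1 k ∈ S.1 ∧ fe0 k ∉ S.1) := by
    ext S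
    simp only [Finset.mem_filter, Finset.mem_univ, true_and]
    tauto
  rw [hswap]
  rw [classA m k T i]
  rw [classB m k T hsym i (fe0 k) (fe1 k) (Or.inl ⟨rfl, rfl⟩)]
  rw [classB m k T hsym i (fe1 k) (fe0 k) (Or.inr ⟨rfl, rfl⟩)]
  rw [classC m k T hsym i]
  push_cast
  ring
end

section
/- Let σ be a type of variables, and let A be a subalgebra of the multivariate polynomial ring ℝ[X_s : s ∈ σ] that is closed under taking homogeneous components (i.e. if P ∈ A then every total-degree homogeneous component of P lies in A). Let F be a formal multivariate power series in the variables X_s with real coefficients such that F has constant coefficient 1 and, for every n ∈ ℕ, the truncation of F to total degree < n lies in A. Then for every real number α and every l ∈ ℕ, the truncation to total degree ≤ l of the polynomial-valued partial sum Σ_{k=0}^{l} binom(α,k)·(F − 1)^k lies in A, where binom(α,k) := α(α−1)⋯(α−k+1)/k! is the generalized binomial coefficient. (Since (F−1) has zero constant coefficient, the truncation to degree ≤ l of (F−1)^k vanishes for k > l, so this partial sum computes the degree-≤ l truncation of the binomial power F^α := Σ_{k=0}^{∞} binom(α,k)(F−1)^k; hence all truncations of F^α lie in A.) -/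
/-- The generalized binomial coefficient `binom(α,k) = α(α−1)⋯(α−k+1)/k!`. -/
noncomputable def genBinom (α : ℝ) (k : ℕ) : ℝ :=
  (∏ i ∈ Finset.range k, (α - i)) / (Nat.factorial k : ℝ)

/-- `truncDegreeLTMem A n F` says that the truncation of the formal power series `F` to total
degree `< n` is a polynomial lying in the subalgebra `A`: there is a polynomial `P ∈ A` whose
coefficients agree with those of `F` in total degree `< n` and vanish in total degree `≥ n`. -/
def truncDegreeLTMem {σ : Type*} (A : Subalgebra ℝ (MvPolynomial σ ℝ)) (n : ℕ)
    (F : MvPowerSeries σ ℝ) : Prop :=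
  ∃ P : MvPolynomial σ ℝ, P ∈ A ∧
    (∀ d : σ →₀ ℕ, (d.sum fun _ e => e) < n →
        MvPolynomial.coeff d P = MvPowerSeries.coeff d F) ∧
    (∀ d : σ →₀ ℕ, n ≤ (d.sum fun _ e => e) → MvPolynomial.coeff d P = 0)

/-- `truncDegreeLEMem A l F` says that the truncation of the formal power series `F` to total
degree `≤ l` is a polynomial lying in the subalgebra `A`. -/
def truncDegreeLEMem {σ : Type*} (A : Subalgebra ℝ (MvPolynomial σ ℝ)) (l : ℕ)
    (F : MvPowerSeries σ ℝ) : Prop :=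
  ∃ P : MvPolynomial σ ℝ, P ∈ A ∧
    (∀ d : σ →₀ ℕ, (d.sum fun _ e => e) ≤ l →
        MvPolynomial.coeff d P = MvPowerSeries.coeff d F) ∧
    (∀ d : σ →₀ ℕ, l < (d.sum fun _ e => e) → MvPolynomial.coeff d P = 0)

private lemma coe_smul_aux {σ : Type*} (a : ℝ) (p : MvPolynomial σ ℝ) :
    ((a • p : MvPolynomial σ ℝ) : MvPowerSeries σ ℝ) = a • (p : MvPowerSeries σ ℝ) := by
  ext e
  rw [MvPolynomial.coeff_coe, MvPolynomial.coeff_smul, MvPowerSeries.coeff_smul,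
    MvPolynomial.coeff_coe, smul_eq_mul]

/-- Let `A` be a subalgebra of `ℝ[X_s : s ∈ σ]` closed under taking total-degree homogeneous
components, and let `F` be a formal power series with constant coefficient `1` all of whose
total-degree truncations lie in `A`.  Then for every `α : ℝ` and `l : ℕ`, the truncation to
total degree `≤ l` of the partial sum `Σ_{k=0}^{l} binom(α,k)(F−1)^k` (which computes the
degree-`≤ l` truncation of the binomial power `F^α`) lies in `A`. -/
theorem stmt_15 {σ : Type*} (A : Subalgebra ℝ (MvPolynomial σ ℝ))
    (hA : ∀ P ∈ A, ∀ d : ℕ, MvPolynomial.homogeneousComponent d P ∈ A)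
    (F : MvPowerSeries σ ℝ)
    (hF1 : MvPowerSeries.constantCoeff F = 1)
    (hFtrunc : ∀ n : ℕ, truncDegreeLTMem A n F) :
    ∀ (α : ℝ) (l : ℕ),
      truncDegreeLEMem A l (∑ k ∈ Finset.range (l + 1), genBinom α k • (F - 1) ^ k) := by
  intro α l
  classical
  obtain ⟨P, hPA, hPeq, hPz⟩ := hFtrunc (l + 1)
  -- polynomial partial sum
  set Q : MvPolynomial σ ℝ := ∑ k ∈ Finset.range (l + 1), genBinom α k • (P - 1) ^ k with hQ
  have hQA : Q ∈ A := by
    apply Subalgebra.sum_mem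
    intro k _
    exact Subalgebra.smul_mem A (Subalgebra.pow_mem A (Subalgebra.sub_mem A hPA A.one_mem) k) _
  -- truncation of Q to total degree ≤ l
  set T : MvPolynomial σ ℝ :=
    ∑ d ∈ Finset.range (l + 1), MvPolynomial.homogeneousComponent d Q with hT
  refine ⟨T, Subalgebra.sum_mem A fun d _ => hA Q hQA d, ?_, ?_⟩
  · intro d hd
    have hdeg : d.degree = d.sum fun _ e => e := rfl
    have hTQ : MvPolynomial.coeff d T = MvPolynomial.coeff d Q := by
      rw [hT, MvPolynomial.coeff_sum]
      simp_rw [MvPolynomial.coeff_homogeneousComponent, hdeg]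
      rw [Finset.sum_ite_eq (Finset.range (l + 1)) _ (fun _ => MvPolynomial.coeff d Q),
        if_pos (Finset.mem_range.mpr (Nat.lt_succ_of_le hd))]
    rw [hTQ]
    -- compare coefficients of Q and the power series sum
    have key : ∀ k : ℕ, ∀ e : σ →₀ ℕ, (e.sum fun _ c => c) ≤ l →
        MvPowerSeries.coeff e (((P : MvPowerSeries σ ℝ) - 1) ^ k)
          = MvPowerSeries.coeff e ((F - 1) ^ k) := by
      intro k
      induction k with
      | zero => intro e _; simp
      | succ k ih =>
        intro e he
        rw [pow_succ, pow_succ, MvPowerSeries.coeff_mul, MvPowerSeries.coeff_mul]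
        refine Finset.sum_congr rfl fun p hp => ?_
        have hmem : p.1 + p.2 = e := Finset.HasAntidiagonal.mem_antidiagonal.mp hp
        have hadd : ((p.1.sum fun _ c => c) + (p.2.sum fun _ c => c)) = e.sum fun _ c => c := by
          rw [← hmem]
          exact (Finsupp.sum_add_index' (fun _ => rfl) (fun _ _ _ => rfl)).symm
        have h1 : (p.1.sum fun _ c => c) ≤ l := by omega
        have h2 : (p.2.sum fun _ c => c) ≤ l := by omega
        rw [ih p.1 h1]
        congr 1
        have hsub : MvPowerSeries.coeff p.2 ((P : MvPowerSeries σ ℝ) - 1)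
            = MvPowerSeries.coeff p.2 (F - 1) := by
          rw [map_sub, map_sub, MvPolynomial.coeff_coe, hPeq p.2 (Nat.lt_succ_of_le h2)]
        exact hsub
    have hQcoe : (Q : MvPowerSeries σ ℝ)
        = ∑ k ∈ Finset.range (l + 1), genBinom α k • ((P : MvPowerSeries σ ℝ) - 1) ^ k := by
      rw [hQ, ← MvPolynomial.coeToMvPowerSeries.ringHom_apply, map_sum]
      refine Finset.sum_congr rfl fun k _ => ?_
      have hc : ((P - 1 : MvPolynomial σ ℝ) : MvPowerSeries σ ℝ)
          = (P : MvPowerSeries σ ℝ) - 1 := by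
        ext e
        rw [MvPolynomial.coeff_coe, MvPolynomial.coeff_sub, map_sub, MvPolynomial.coeff_coe,
          ← MvPolynomial.coe_one, MvPolynomial.coeff_coe]
      rw [MvPolynomial.coeToMvPowerSeries.ringHom_apply, coe_smul_aux,
        MvPolynomial.coe_pow, hc]
    calc MvPolynomial.coeff d Q = MvPowerSeries.coeff d (Q : MvPowerSeries σ ℝ) := by
            rw [MvPolynomial.coeff_coe]
      _ = _ := by
            rw [hQcoe, map_sum, map_sum]
            refine Finset.sum_congr rfl fun k _ => ?_
            rw [MvPowerSeries.coeff_smul, MvPowerSeries.coeff_smul, key k d hd]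
  · intro d hd
    rw [hT, MvPolynomial.coeff_sum]
    refine Finset.sum_eq_zero fun n hn => ?_
    rw [MvPolynomial.coeff_homogeneousComponent]
    have hdeg : d.degree = d.sum fun _ e => e := rfl
    rw [if_neg]
    rw [hdeg]
    have := Finset.mem_range.mp hn
    omega
end
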